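/- Let 0 < m < n be integers and let h_j/k_j < h_{j+1}/k_{j+1} < h_{j+2}/k_{j+2} be three successive fractions of F(B(n),m), i.e. each is the successor of the preceding one (all fractions in lowest terms). Then, with D := ⌊min{(h_j+m)/h_{j+1}, (k_j+n)/k_{j+1}, (k_j−h_j+n−m)/(k_{j+1}−h_{j+1})}⌋, one has h_{j+2} = D·h_{j+1} − h_j and k_{j+2} = D·k_{j+1} − k_j. -/

import Mathlib

/-- The Farey sequence `F_n` of order `n`, viewed as the set of rationals `q`
with `0 ≤ q ≤ 1` whose lowest-terms denominator is at most `n`. -/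
def Farey (n : ℕ) : Set ℚ :=
  {q : ℚ | 0 ≤ q ∧ q ≤ 1 ∧ q.den ≤ n}

/-- The Farey subsequence `F(B(n),m)`: fractions `h/k ∈ F_n` in lowest terms
with `h ≤ m` and `k - h ≤ n - m`. -/
def FareyB (n m : ℕ) : Set ℚ :=
  {q : ℚ | 0 ≤ q ∧ q ≤ 1 ∧ q.den ≤ n ∧ q.num ≤ (m : ℤ) ∧
    (q.den : ℤ) - q.num ≤ (n : ℤ) - (m : ℤ)}

/-- `f'` is the predecessor of `f` in the set `S` of rationals. -/
def IsPredIn (S : Set ℚ) (f' f : ℚ) : Prop :=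
  f' ∈ S ∧ f ∈ S ∧ f' < f ∧ ∀ g ∈ S, ¬(f' < g ∧ g < f)

/-- `f'` is the successor of `f` in the set `S` of rationals. -/
def IsSuccIn (S : Set ℚ) (f f' : ℚ) : Prop :=
  f ∈ S ∧ f' ∈ S ∧ f < f' ∧ ∀ g ∈ S, ¬(f < g ∧ g < f')

private lemma gcd_one_of_det {x y c d : ℤ} (h : c * y - d * x = 1) : Int.gcd x y = 1 := by
  have hx : (↑(Int.gcd x y) : ℤ) ∣ x := Int.gcd_dvd_left x y
  have hy : (↑(Int.gcd x y) : ℤ) ∣ y := Int.gcd_dvd_right x y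
  have h1 : (↑(Int.gcd x y) : ℤ) ∣ 1 := by
    rw [← h]; exact dvd_sub (hy.mul_left c) (hx.mul_left d)
  exact Nat.dvd_one.mp (by exact_mod_cast h1)

private lemma mem_FareyB_iff {n m : ℕ} {h k : ℤ} (hk : 0 < k) (hc : Int.gcd h k = 1) :
    (h : ℚ) / (k : ℚ) ∈ FareyB n m ↔
      0 ≤ h ∧ h ≤ k ∧ k ≤ (n : ℤ) ∧ h ≤ (m : ℤ) ∧ k - h ≤ (n : ℤ) - (m : ℤ) := by
  have hk' : (0 : ℚ) < (k : ℚ) := by exact_mod_cast hk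
  have hnum : ((h : ℚ) / (k : ℚ)).num = h := Rat.num_div_eq_of_coprime hk hc
  have hden : ((((h : ℚ) / (k : ℚ)).den : ℤ)) = k := Rat.den_div_eq_of_coprime hk hc
  simp only [FareyB, Set.mem_setOf_eq, hnum, hden]
  rw [le_div_iff₀ hk', div_le_one hk', zero_mul]
  constructor
  · rintro ⟨h0, h1, h2, h3, h4⟩
    refine ⟨by exact_mod_cast h0, by exact_mod_cast h1, ?_, h3, h4⟩
    have h5 : ((((h : ℚ) / (k : ℚ)).den : ℤ)) ≤ (n : ℤ) := by exact_mod_cast h2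
    rwa [hden] at h5
  · rintro ⟨h0, h1, h2, h3, h4⟩
    refine ⟨by exact_mod_cast h0, by exact_mod_cast h1, ?_, h3, h4⟩
    have h5 : ((((h : ℚ) / (k : ℚ)).den : ℤ)) ≤ (n : ℤ) := by rw [hden]; exact h2
    exact_mod_cast h5

set_option maxHeartbeats 1000000 in
private lemma succ_det {n m : ℕ} (hm : 0 < m) (hmn : m < n) {a b c d : ℤ}
    (hb : 0 < b) (hd : 0 < d) (hab : Int.gcd a b = 1) (hcd : Int.gcd c d = 1)
    (hsucc : IsSuccIn (FareyB n m) ((a : ℚ) / b) ((c : ℚ) / d)) :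
    c * b - a * d = 1 := by
  obtain ⟨mem_a, mem_c, hlt, hbtw⟩ := hsucc
  rw [mem_FareyB_iff hb hab] at mem_a
  rw [mem_FareyB_iff hd hcd] at mem_c
  obtain ⟨ha0, hab', hbn, ham, hbam⟩ := mem_a
  obtain ⟨hc0, hcd', hdn, hcm, hdcm⟩ := mem_c
  have hb' : (0 : ℚ) < (b : ℚ) := by exact_mod_cast hb
  have hd' : (0 : ℚ) < (d : ℚ) := by exact_mod_cast hd
  have hlt' : a * d < c * b := by
    rw [div_lt_div_iff₀ hb' hd'] at hlt; exact_mod_cast hlt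
  have hc1 : 1 ≤ c := by nlinarith [mul_nonneg ha0 hd.le]
  -- Bezout coefficients
  obtain ⟨u, v, huv⟩ := Int.isCoprime_iff_gcd_eq_one.mpr hcd
  obtain ⟨x₀, y₀, hb0⟩ : ∃ x₀ y₀ : ℤ, c * y₀ - d * x₀ = 1 := ⟨-v, u, by linear_combination huv⟩
  -- extremal solution of c*y - d*x = 1 inside the constraint region
  obtain ⟨x, y, hdet, hxm, hyn, hyx, hmax⟩ :
      ∃ x y : ℤ, c * y - d * x = 1 ∧ x ≤ (m : ℤ) ∧ y ≤ (n : ℤ) ∧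
        y - x ≤ (n : ℤ) - (m : ℤ) ∧
        ((m : ℤ) < x + c ∨ (n : ℤ) < y + d ∨
          (c < d ∧ (n : ℤ) - (m : ℤ) < (y - x) + (d - c))) := by
    by_cases hcd2 : c < d
    · obtain ⟨t₁, ht₁⟩ : ∃ w : ℤ, w = ((m : ℤ) - x₀) / c := ⟨_, rfl⟩
      obtain ⟨t₂, ht₂⟩ : ∃ w : ℤ, w = ((n : ℤ) - y₀) / d := ⟨_, rfl⟩
      obtain ⟨t₃, ht₃⟩ : ∃ w : ℤ, w = ((n : ℤ) - (m : ℤ) - (y₀ - x₀)) / (d - c) := ⟨_, rfl⟩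
      have e₁ : ∀ s : ℤ, s ≤ t₁ ↔ s * c ≤ (m : ℤ) - x₀ := fun s =>
        ht₁ ▸ Int.le_ediv_iff_mul_le (by omega)
      have e₂ : ∀ s : ℤ, s ≤ t₂ ↔ s * d ≤ (n : ℤ) - y₀ := fun s =>
        ht₂ ▸ Int.le_ediv_iff_mul_le (by omega)
      have e₃ : ∀ s : ℤ, s ≤ t₃ ↔ s * (d - c) ≤ (n : ℤ) - (m : ℤ) - (y₀ - x₀) := fun s =>
        ht₃ ▸ Int.le_ediv_iff_mul_le (by omega)
      clear ht₁ ht₂ ht₃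
      set t : ℤ := min (min t₁ t₂) t₃ with ht
      have htle1 : t ≤ t₁ := (min_le_left _ _).trans (min_le_left _ _)
      have htle2 : t ≤ t₂ := (min_le_left _ _).trans (min_le_right _ _)
      have htle3 : t ≤ t₃ := min_le_right _ _
      refine ⟨x₀ + t * c, y₀ + t * d, by linear_combination hb0, ?_, ?_, ?_, ?_⟩
      · have := (e₁ t).mp htle1; linarith
      · have := (e₂ t).mp htle2; linarith
      · have h3 := (e₃ t).mp htle3
        have h4 : t * (d - c) = t * d - t * c := by ring
        linarith
      · have hor : t + 1 > t₁ ∨ t + 1 > t₂ ∨ t + 1 > t₃ := by omega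
        rcases hor with h | h | h
        · left
          have h3 : (m : ℤ) - x₀ < (t + 1) * c :=
            lt_of_not_ge (fun hh => absurd ((e₁ (t + 1)).mpr hh) (by omega))
          have h4 : (t + 1) * c = t * c + c := by ring
          linarith
        · right; left
          have h3 : (n : ℤ) - y₀ < (t + 1) * d :=
            lt_of_not_ge (fun hh => absurd ((e₂ (t + 1)).mpr hh) (by omega))
          have h4 : (t + 1) * d = t * d + d := by ring
          linarith
        · right; right
          refine ⟨hcd2, ?_⟩
          have h3 : (n : ℤ) - (m : ℤ) - (y₀ - x₀) < (t + 1) * (d - c) :=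
            lt_of_not_ge (fun hh => absurd ((e₃ (t + 1)).mpr hh) (by omega))
          have h4 : (t + 1) * (d - c) = t * d - t * c + d - c := by ring
          linarith
    · -- then c = d = 1
      have hcd3 : c = d := le_antisymm hcd' (by omega)
      have hc1' : c = 1 := by
        have h5 := hcd
        rw [hcd3, Int.gcd_self] at h5
        omega
      have hd1' : d = 1 := hcd3 ▸ hc1'
      have hyx0 : y₀ - x₀ = 1 := by
        have h5 := hb0; rw [hc1', hd1'] at h5; omega
      obtain ⟨t₁, ht₁⟩ : ∃ w : ℤ, w = ((m : ℤ) - x₀) / c := ⟨_, rfl⟩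
      obtain ⟨t₂, ht₂⟩ : ∃ w : ℤ, w = ((n : ℤ) - y₀) / d := ⟨_, rfl⟩
      have e₁ : ∀ s : ℤ, s ≤ t₁ ↔ s * c ≤ (m : ℤ) - x₀ := fun s =>
        ht₁ ▸ Int.le_ediv_iff_mul_le (by omega)
      have e₂ : ∀ s : ℤ, s ≤ t₂ ↔ s * d ≤ (n : ℤ) - y₀ := fun s =>
        ht₂ ▸ Int.le_ediv_iff_mul_le (by omega)
      clear ht₁ ht₂
      set t : ℤ := min t₁ t₂ with ht
      have htle1 : t ≤ t₁ := min_le_left _ _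
      have htle2 : t ≤ t₂ := min_le_right _ _
      refine ⟨x₀ + t * c, y₀ + t * d, by linear_combination hb0, ?_, ?_, ?_, ?_⟩
      · have := (e₁ t).mp htle1; linarith
      · have := (e₂ t).mp htle2; linarith
      · simp only [hc1', hd1', mul_one]; omega
      · have hor : t + 1 > t₁ ∨ t + 1 > t₂ := by omega
        rcases hor with h | h
        · left
          have h3 : (m : ℤ) - x₀ < (t + 1) * c :=
            lt_of_not_ge (fun hh => absurd ((e₁ (t + 1)).mpr hh) (by omega))
          have h4 : (t + 1) * c = t * c + c := by ring
          linarith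
        · right; left
          have h3 : (n : ℤ) - y₀ < (t + 1) * d :=
            lt_of_not_ge (fun hh => absurd ((e₂ (t + 1)).mpr hh) (by omega))
          nlinarith [h3]
  -- the extremal solution has positive denominator
  have hy1 : 1 ≤ y := by
    by_contra hy0
    push_neg at hy0
    have hy0' : y ≤ 0 := by omega
    have hx1 : x ≤ -1 := by nlinarith [mul_nonpos_of_nonneg_of_nonpos (by omega : (0:ℤ) ≤ c) hy0']
    rcases hmax with h | h | ⟨hcd2, h⟩
    · omega
    · omega
    · have hd2 : 2 ≤ d := by omega
      have e1 : d * (y - x) = (d - c) * y + 1 := by linear_combination hdet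
      have h2 : (d - c) * y ≤ 0 := mul_nonpos_of_nonneg_of_nonpos (by omega) hy0'
      have h3 : y - x ≤ 0 := by nlinarith
      omega
  have hx0 : 0 ≤ x := by nlinarith
  have hxy : x < y := by nlinarith
  have hgxy : Int.gcd x y = 1 := gcd_one_of_det hdet
  have hy' : (0 : ℚ) < (y : ℚ) := by exact_mod_cast (by omega : (0:ℤ) < y)
  have hmemxy : (x : ℚ) / (y : ℚ) ∈ FareyB n m :=
    (mem_FareyB_iff (by omega) hgxy).mpr ⟨hx0, hxy.le, hyn, hxm, hyx⟩
  have hxy_lt : (x : ℚ) / (y : ℚ) < (c : ℚ) / (d : ℚ) := by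
    rw [div_lt_div_iff₀ hy' hd']
    exact_mod_cast (by nlinarith : x * d < c * y)
  have hnotlt : ¬ ((a : ℚ) / b < (x : ℚ) / y) := fun hh =>
    hbtw ((x : ℚ) / y) hmemxy ⟨hh, hxy_lt⟩
  have hle1 : x * b ≤ a * y := by
    have := not_lt.mp hnotlt
    rw [div_le_div_iff₀ hy' hb'] at this
    exact_mod_cast this
  have hle2 : a * y ≤ b * x := by
    by_contra hcon
    push_neg at hcon
    have hu : 1 ≤ a * y - b * x := by omega
    have hΔ : 1 ≤ c * b - a * d := by omega
    have ea : a = (a * y - b * x) * c + (c * b - a * d) * x := by linear_combination (-a) * hdet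
    have eb : b = (a * y - b * x) * d + (c * b - a * d) * y := by linear_combination (-b) * hdet
    rcases hmax with h | h | ⟨hcd2, h⟩
    · nlinarith [mul_nonneg (by omega : (0:ℤ) ≤ a * y - b * x - 1) (by omega : (0:ℤ) ≤ c),
        mul_nonneg (by omega : (0:ℤ) ≤ c * b - a * d - 1) hx0]
    · nlinarith [mul_nonneg (by omega : (0:ℤ) ≤ a * y - b * x - 1) (by omega : (0:ℤ) ≤ d),
        mul_nonneg (by omega : (0:ℤ) ≤ c * b - a * d - 1) (by omega : (0:ℤ) ≤ y)]
    · nlinarith [mul_nonneg (by omega : (0:ℤ) ≤ a * y - b * x - 1) (by omega : (0:ℤ) ≤ d - c),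
        mul_nonneg (by omega : (0:ℤ) ≤ c * b - a * d - 1) (by omega : (0:ℤ) ≤ y - x)]
  have heq : x * b = a * y := by nlinarith
  have heqq : (x : ℚ) / y = (a : ℚ) / b := by
    rw [div_eq_div_iff hy'.ne' hb'.ne']
    exact_mod_cast heq
  have hgxy' : Nat.Coprime x.natAbs y.natAbs := hgxy
  have hab' : Nat.Coprime a.natAbs b.natAbs := hab
  obtain ⟨hxa, hyb⟩ := Rat.div_int_inj (by omega : (0:ℤ) < y) hb hgxy' hab' heqq
  rw [← hxa, ← hyb]
  linarith [hdet]

set_option maxHeartbeats 1000000 in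
theorem stmt_9 (n m : ℕ) (hm : 0 < m) (hmn : m < n)
    (h₁ k₁ h₂ k₂ h₃ k₃ : ℤ)
    (hk₁ : 0 < k₁) (hk₂ : 0 < k₂) (hk₃ : 0 < k₃)
    (hc₁ : Int.gcd h₁ k₁ = 1) (hc₂ : Int.gcd h₂ k₂ = 1) (hc₃ : Int.gcd h₃ k₃ = 1)
    (hm₁ : (h₁ : ℚ) / (k₁ : ℚ) ∈ FareyB n m)
    (hm₂ : (h₂ : ℚ) / (k₂ : ℚ) ∈ FareyB n m)
    (hm₃ : (h₃ : ℚ) / (k₃ : ℚ) ∈ FareyB n m)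
    (hs₁ : IsSuccIn (FareyB n m) ((h₁ : ℚ) / (k₁ : ℚ)) ((h₂ : ℚ) / (k₂ : ℚ)))
    (hs₂ : IsSuccIn (FareyB n m) ((h₂ : ℚ) / (k₂ : ℚ)) ((h₃ : ℚ) / (k₃ : ℚ)))
    (D : ℤ)
    (hD : D = ⌊min (min (((h₁ : ℚ) + (m : ℚ)) / (h₂ : ℚ))
        (((k₁ : ℚ) + (n : ℚ)) / (k₂ : ℚ)))
        (((k₁ : ℚ) - (h₁ : ℚ) + (n : ℚ) - (m : ℚ)) / ((k₂ : ℚ) - (h₂ : ℚ)))⌋) :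
    h₃ = D * h₂ - h₁ ∧ k₃ = D * k₂ - k₁ := by
  have hdet₁ : h₂ * k₁ - h₁ * k₂ = 1 := succ_det hm hmn hk₁ hk₂ hc₁ hc₂ hs₁
  have hdet₂ : h₃ * k₂ - h₂ * k₃ = 1 := succ_det hm hmn hk₂ hk₃ hc₂ hc₃ hs₂
  rw [mem_FareyB_iff hk₁ hc₁] at hm₁
  rw [mem_FareyB_iff hk₂ hc₂] at hm₂
  rw [mem_FareyB_iff hk₃ hc₃] at hm₃
  obtain ⟨h10, h1k, h1n, h1m, h1nm⟩ := hm₁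
  obtain ⟨h20, h2k, h2n, h2m, h2nm⟩ := hm₂
  obtain ⟨h30, h3k, h3n, h3m, h3nm⟩ := hm₃
  -- h₂ ≥ 1 and k₂ - h₂ ≥ 1
  have hh2 : 1 ≤ h₂ := by
    rcases le_or_gt h₂ 0 with hh | hh
    · exfalso
      have e1 : h₂ * k₁ ≤ 0 := mul_nonpos_iff.mpr (Or.inr ⟨hh, hk₁.le⟩)
      have e2 : 0 ≤ h₁ * k₂ := mul_nonneg h10 hk₂.le
      linarith
    · omega
  have hkh2 : 1 ≤ k₂ - h₂ := by
    have e : h₃ * k₂ ≤ k₃ * k₂ := mul_le_mul_of_nonneg_right h3k hk₂.le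
    have e3 : (k₂ - h₂) * k₃ = k₃ * k₂ - h₂ * k₃ := by ring
    have e4 : 1 ≤ (k₂ - h₂) * k₃ := by linarith
    rcases le_or_gt (k₂ - h₂) 0 with hh | hh
    · exfalso
      have e5 : (k₂ - h₂) * k₃ ≤ 0 := mul_nonpos_iff.mpr (Or.inr ⟨hh, hk₃.le⟩)
      linarith
    · omega
  have hk2' : (0 : ℚ) < (k₂ : ℚ) := by exact_mod_cast hk₂
  have hh2' : (0 : ℚ) < (h₂ : ℚ) := by exact_mod_cast hh2.trans_lt' (by norm_num)
  have hkh2' : (0 : ℚ) < (k₂ : ℚ) - (h₂ : ℚ) := by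
    have : (0:ℤ) < k₂ - h₂ := by omega
    exact_mod_cast this
  set a : ℤ := h₃ * k₁ - h₁ * k₃ with ha
  have rel_h : h₃ = a * h₂ - h₁ := by rw [ha]; linear_combination (-h₃) * hdet₁ + (-h₁) * hdet₂
  have rel_k : k₃ = a * k₂ - k₁ := by rw [ha]; linear_combination (-k₃) * hdet₁ + (-k₁) * hdet₂
  have haD : a ≤ D := by
    rw [hD, Int.le_floor]
    refine le_min (le_min ?_ ?_) ?_
    · rw [le_div_iff₀ hh2']
      exact_mod_cast (by linarith [rel_h, h3m] : a * h₂ ≤ h₁ + (m : ℤ))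
    · rw [le_div_iff₀ hk2']
      exact_mod_cast (by linarith [rel_k, h3n] : a * k₂ ≤ k₁ + (n : ℤ))
    · rw [le_div_iff₀ hkh2']
      have : a * (k₂ - h₂) ≤ k₁ - h₁ + (n : ℤ) - (m : ℤ) := by
        have e1 : a * (k₂ - h₂) = a * k₂ - a * h₂ := by ring
        linarith [rel_h, rel_k, h3nm]
      calc ((a : ℚ)) * ((k₂ : ℚ) - (h₂ : ℚ)) = ((a * (k₂ - h₂) : ℤ) : ℚ) := by push_cast; ring
        _ ≤ _ := by exact_mod_cast this
  have hDa : D ≤ a := by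
    by_contra hcon
    push_neg at hcon
    have hD1 : a + 1 ≤ D := by omega
    -- D satisfies the three bounds
    have hfl := hD ▸ Int.floor_le (min (min (((h₁ : ℚ) + (m : ℚ)) / (h₂ : ℚ))
        (((k₁ : ℚ) + (n : ℚ)) / (k₂ : ℚ)))
        (((k₁ : ℚ) - (h₁ : ℚ) + (n : ℚ) - (m : ℚ)) / ((k₂ : ℚ) - (h₂ : ℚ))))
    have hb1 : D * h₂ ≤ h₁ + (m : ℤ) := by
      have := ((min_le_left _ _).trans' (min_le_left _ _)).trans' hfl
      rw [le_div_iff₀ hh2'] at this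
      exact_mod_cast this
    have hb2 : D * k₂ ≤ k₁ + (n : ℤ) := by
      have := ((min_le_right _ _).trans' (min_le_left _ _)).trans' hfl
      rw [le_div_iff₀ hk2'] at this
      exact_mod_cast this
    have hb3 : D * (k₂ - h₂) ≤ k₁ - h₁ + (n : ℤ) - (m : ℤ) := by
      have h6 := (min_le_right _ _).trans' hfl
      rw [le_div_iff₀ hkh2'] at h6
      have h7 : ((D * (k₂ - h₂) : ℤ) : ℚ) ≤ ((k₁ - h₁ + (n : ℤ) - (m : ℤ) : ℤ) : ℚ) := by
        push_cast
        push_cast at h6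
        linarith
      exact_mod_cast h7
    set p : ℤ := D * h₂ - h₁ with hp
    set q : ℤ := D * k₂ - k₁ with hq
    clear_value p q
    have hqk : k₃ + k₂ ≤ q := by
      have h5 := mul_le_mul_of_nonneg_right hD1 hk₂.le
      have h6 : (a + 1) * k₂ = a * k₂ + k₂ := by ring
      linarith [rel_k, hq]
    have hpk : h₃ + h₂ ≤ p := by
      have h5 := mul_le_mul_of_nonneg_right hD1 (by linarith : (0:ℤ) ≤ h₂)
      have h6 : (a + 1) * h₂ = a * h₂ + h₂ := by ring
      linarith [rel_h, hp]
    have hq0 : 0 < q := by omega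
    have hq' : (0 : ℚ) < (q : ℚ) := by exact_mod_cast hq0
    have hdetpq : k₂ * p - h₂ * q = 1 := by rw [hp, hq]; linear_combination hdet₁
    have hgpq : Int.gcd p q = 1 := by
      rw [Int.gcd_comm]; exact gcd_one_of_det hdetpq
    have hqp : 1 ≤ q - p := by
      have h5 := mul_le_mul_of_nonneg_right hD1 (by linarith : (0:ℤ) ≤ k₂ - h₂)
      have h6 : (a + 1) * (k₂ - h₂) = a * k₂ - a * h₂ + k₂ - h₂ := by ring
      have h7 : D * (k₂ - h₂) = D * k₂ - D * h₂ := by ring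
      linarith [rel_h, rel_k, hp, hq, h3k]
    have hpm : p ≤ (m : ℤ) := by rw [hp]; linarith [hb1]
    have hqn : q ≤ (n : ℤ) := by rw [hq]; linarith [hb2]
    have hqpnm : q - p ≤ (n : ℤ) - (m : ℤ) := by
      rw [hp, hq]
      have h9 : D * (k₂ - h₂) = D * k₂ - D * h₂ := by ring
      linarith [hb3]
    have hmempq : (p : ℚ) / (q : ℚ) ∈ FareyB n m := by
      rw [mem_FareyB_iff hq0 hgpq]
      refine ⟨by omega, by omega, hqn, hpm, hqpnm⟩
    have hlt1 : (h₂ : ℚ) / (k₂ : ℚ) < (p : ℚ) / (q : ℚ) := by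
      rw [div_lt_div_iff₀ hk2' hq']
      have h5 : k₂ * p = p * k₂ := by ring
      exact_mod_cast (by linarith [hdetpq, h5] : h₂ * q < p * k₂)
    have hlt2 : (p : ℚ) / (q : ℚ) < (h₃ : ℚ) / (k₃ : ℚ) := by
      have hk3' : (0 : ℚ) < (k₃ : ℚ) := by exact_mod_cast hk₃
      rw [div_lt_div_iff₀ hq' hk3']
      have h8 : h₃ * q - p * k₃ = D - a := by
        rw [hp, hq, ha]; linear_combination D * hdet₂
      exact_mod_cast (by linarith [h8, hD1] : p * k₃ < h₃ * q)
    exact hs₂.2.2.2 ((p : ℚ) / q) hmempq ⟨hlt1, hlt2⟩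
  have : a = D := le_antisymm haD hDa
  rw [← this]
  exact ⟨rel_h, rel_k⟩
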